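/- Let S be a pseudo-symmetric numerical semigroup minimally generated by n_1, n_2, n_3, n_4, set f = F(S)/2, and let α_i = min{k ≥ 1 : k·n_i lies in the submonoid generated by the n_j with j ≠ i}. Suppose (as holds after a suitable relabeling of the generators) that for some nonnegative integer a one has f = −n_1 + (α_2−1)n_2, f = −n_2 + (α_3−1)n_3, f = (α_1−1)n_1 − n_3 + (α_4−1)n_4 and f = (α_1−1)n_1 + a·n_2 − n_4. Then n_1, n_2, n_3, n_4 are all odd if and only if one of the following holds: (1) f is odd and each of the four integers (α_2−1) − 1, (α_3−1) − 1, (α_1−1) + (α_4−1) − 1, (α_1−1) + a − 1 is odd; (2) f is even and each of these four integers is even. -/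

import Mathlib

/-- A numerical semigroup: an additive submonoid of `ℕ` with finite complement. -/
structure NumericalSemigroup where
  carrier : Set ℕ
  zero_mem : 0 ∈ carrier
  add_mem : ∀ {a b : ℕ}, a ∈ carrier → b ∈ carrier → a + b ∈ carrier
  cofinite : Set.Finite carrierᶜ

namespace NumericalSemigroup

/-- The set of pseudo-Frobenius numbers of `S`. -/
def PF (S : NumericalSemigroup) : Set ℕ :=
  {f | f ∉ S.carrier ∧ ∀ s ∈ S.carrier, s ≠ 0 → f + s ∈ S.carrier}

/-- The Frobenius number of `S` (the maximum of the complement). -/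
noncomputable def frob (S : NumericalSemigroup) : ℕ := sSup S.carrierᶜ

/-- The genus of `S`: the number of gaps. -/
noncomputable def genus (S : NumericalSemigroup) : ℕ := S.carrierᶜ.ncard

/-- The type of `S`: the number of pseudo-Frobenius numbers. -/
noncomputable def typ (S : NumericalSemigroup) : ℕ := S.PF.ncard

/-- `S` is almost symmetric if `2 g(S) = F(S) + t(S)`. -/
def AlmostSymmetric (S : NumericalSemigroup) : Prop :=
  2 * S.genus = S.frob + S.typ

/-- `S` is pseudo-symmetric if `2 g(S) = F(S) + 2`. -/
def PseudoSymmetric (S : NumericalSemigroup) : Prop :=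
  2 * S.genus = S.frob + 2

/-- `S` is minimally generated by the four (distinct) elements `n1, n2, n3, n4`. -/
def MinGen4 (S : NumericalSemigroup) (n1 n2 n3 n4 : ℕ) : Prop :=
  [n1, n2, n3, n4].Pairwise (· ≠ ·) ∧
  S.carrier = (AddSubmonoid.closure ({n1, n2, n3, n4} : Set ℕ) : Set ℕ) ∧
  ∀ B ⊂ ({n1, n2, n3, n4} : Set ℕ),
    S.carrier ≠ (AddSubmonoid.closure B : Set ℕ)

end NumericalSemigroup

/-- `alphaMin x a b c` is `min {k ≥ 1 : k·x ∈ ⟨a, b, c⟩}`. -/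
noncomputable def alphaMin (x a b c : ℕ) : ℕ :=
  sInf {k : ℕ | 1 ≤ k ∧ (k * x) ∈ (AddSubmonoid.closure ({a, b, c} : Set ℕ) : Set ℕ)}


lemma zmod2_int_even (z : ℤ) : Even z ↔ (z : ZMod 2) = 0 := by
  rw [ZMod.intCast_zmod_eq_zero_iff_dvd]
  constructor
  · rintro ⟨k, rfl⟩; exact ⟨k, by ring⟩
  · rintro ⟨k, rfl⟩; exact ⟨k, by ring⟩

lemma zmod2_int_odd (z : ℤ) : Odd z ↔ (z : ZMod 2) = 1 := by
  rw [← Int.not_even_iff_odd, zmod2_int_even]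
  have : ∀ x : ZMod 2, ¬ x = 0 ↔ x = 1 := by decide
  exact this _

lemma zmod2_nat_odd (n : ℕ) : Odd n ↔ (n : ZMod 2) = 1 := by
  rw [← Int.odd_coe_nat, zmod2_int_odd]; push_cast; rfl

lemma zmod2_nat_even (n : ℕ) : Even n ↔ (n : ZMod 2) = 0 := by
  rw [← Int.even_coe_nat, zmod2_int_even]; push_cast; rfl

lemma odd_set_infinite : Set.Infinite {x : ℕ | Odd x} := by
  apply Set.infinite_of_injective_forall_mem (f := fun k : ℕ => 2 * k + 1)
  case hi => intro a b hab; simpa using hab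
  case hf => intro k; exact ⟨k, rfl⟩

set_option maxRecDepth 20000 in
set_option synthInstance.maxSize 2000 in
set_option synthInstance.maxHeartbeats 1000000 in
set_option maxHeartbeats 2000000 in
lemma zmod2_core : ∀ F N1 N2 N3 N4 B1 B2 B3 B4 A : ZMod 2,
    F = -N1 + B2 * N2 → F = -N2 + B3 * N3 → F = B1 * N1 - N3 + B4 * N4 →
    F = B1 * N1 + A * N2 - N4 → ¬(N1 = 0 ∧ N2 = 0 ∧ N3 = 0 ∧ N4 = 0) →
    ((N1 = 1 ∧ N2 = 1 ∧ N3 = 1 ∧ N4 = 1) ↔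
      ((F = 1 ∧ B2 - 1 = 1 ∧ B3 - 1 = 1 ∧ B1 + B4 - 1 = 1 ∧ B1 + A - 1 = 1) ∨
       (F = 0 ∧ B2 - 1 = 0 ∧ B3 - 1 = 0 ∧ B1 + B4 - 1 = 0 ∧ B1 + A - 1 = 0))) := by
  decide

/-- Parity criterion for the generators of a pseudo-symmetric numerical semigroup of
embedding dimension four, in terms of the rows of the RF-matrix of `F(S)/2`. -/
theorem odd_generators_iff_pseudoSymmetric_fourGen
    (S : NumericalSemigroup) (n1 n2 n3 n4 : ℕ)
    (hmin : S.MinGen4 n1 n2 n3 n4)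
    (hps : S.PseudoSymmetric)
    (α1 α2 α3 α4 : ℕ)
    (hα1 : α1 = alphaMin n1 n2 n3 n4) (hα2 : α2 = alphaMin n2 n1 n3 n4)
    (hα3 : α3 = alphaMin n3 n1 n2 n4) (hα4 : α4 = alphaMin n4 n1 n2 n3)
    (f : ℕ) (hf : 2 * f = S.frob)
    (a : ℕ)
    (e1 : (f : ℤ) = -(n1 : ℤ) + ((α2 : ℤ) - 1) * n2)
    (e2 : (f : ℤ) = -(n2 : ℤ) + ((α3 : ℤ) - 1) * n3)
    (e3 : (f : ℤ) = ((α1 : ℤ) - 1) * n1 - (n3 : ℤ) + ((α4 : ℤ) - 1) * n4)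
    (e4 : (f : ℤ) = ((α1 : ℤ) - 1) * n1 + (a : ℤ) * n2 - (n4 : ℤ)) :
    (Odd n1 ∧ Odd n2 ∧ Odd n3 ∧ Odd n4) ↔
      (Odd f ∧ Odd (((α2 : ℤ) - 1) - 1) ∧ Odd (((α3 : ℤ) - 1) - 1) ∧
        Odd (((α1 : ℤ) - 1) + ((α4 : ℤ) - 1) - 1) ∧
        Odd (((α1 : ℤ) - 1) + (a : ℤ) - 1)) ∨
      (Even f ∧ Even (((α2 : ℤ) - 1) - 1) ∧ Even (((α3 : ℤ) - 1) - 1) ∧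
        Even (((α1 : ℤ) - 1) + ((α4 : ℤ) - 1) - 1) ∧
        Even (((α1 : ℤ) - 1) + (a : ℤ) - 1)) := by

  obtain ⟨_, hc, _⟩ := hmin
  -- the generators cannot all be even
  have hnotall : ¬(Even n1 ∧ Even n2 ∧ Even n3 ∧ Even n4) := by
    rintro ⟨h1, h2, h3, h4⟩
    have hev : ∀ x ∈ S.carrier, Even x := by
      rw [hc]
      intro x hx
      induction hx using AddSubmonoid.closure_induction with
      | mem y hy =>
        simp only [Set.mem_insert_iff, Set.mem_singleton_iff] at hy
        rcases hy with rfl | rfl | rfl | rfl <;> assumption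
      | zero => exact Even.zero
      | add p q _ _ hp hq => exact hp.add hq
    have hsub : {x : ℕ | Odd x} ⊆ S.carrierᶜ := by
      intro x hx hxc
      exact (Nat.not_even_iff_odd.mpr hx) (hev x hxc)
    exact (odd_set_infinite.mono hsub) S.cofinite
  have hne : ¬((n1 : ZMod 2) = 0 ∧ (n2 : ZMod 2) = 0 ∧ (n3 : ZMod 2) = 0 ∧
      (n4 : ZMod 2) = 0) := by
    rintro ⟨h1, h2, h3, h4⟩
    exact hnotall ⟨(zmod2_nat_even _).2 h1, (zmod2_nat_even _).2 h2,
      (zmod2_nat_even _).2 h3, (zmod2_nat_even _).2 h4⟩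
  have E1 := congrArg (fun z : ℤ => (z : ZMod 2)) e1
  have E2 := congrArg (fun z : ℤ => (z : ZMod 2)) e2
  have E3 := congrArg (fun z : ℤ => (z : ZMod 2)) e3
  have E4 := congrArg (fun z : ℤ => (z : ZMod 2)) e4
  push_cast at E1 E2 E3 E4
  rw [zmod2_nat_odd, zmod2_nat_odd, zmod2_nat_odd, zmod2_nat_odd, zmod2_nat_odd,
    zmod2_nat_even, zmod2_int_odd, zmod2_int_odd, zmod2_int_odd, zmod2_int_odd,
    zmod2_int_even, zmod2_int_even, zmod2_int_even, zmod2_int_even]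
  push_cast
  exact zmod2_core _ _ _ _ _ _ _ _ _ _ E1 E2 E3 E4 hne
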